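/- Let H = (X ∪ Y ∪ Z, F) be a tripartite 3-uniform hypergraph with |X| = |Y| = |Z| = n and F ⊆ X × Y × Z, |F| = m, and let G_H be the 4-layer graph constructed from H by the reduction. Then G_H admits an IV-matching if and only if H admits a perfect matching. -/

import Mathlib

/-!
The reduction from 3-Dimensional Matching to the IV-matching problem
(Folwarczný–Knop).  The tripartite 3-uniform hypergraph `H` has pairwise
disjoint vertex classes `X`, `Y`, `Z` (modeled as separate types) and
hyperedge set `F ⊆ X × Y × Z`.  The reduction graph `G_H` has vertex type
`RVtx F` with four layers `L1 = X ∪ Y`, `L2 = {x_e, y_e : e ∈ F}`,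
`L3 = {z_e : e ∈ F}`, `L4 = Z`, and edge set `GHedges F`.
-/

set_option maxHeartbeats 1000000
set_option synthInstance.maxSize 512

open Finset

variable {X Y Z : Type*} [DecidableEq X] [DecidableEq Y] [DecidableEq Z]
  [Fintype X] [Fintype Y] [Fintype Z]

/-- Vertex type of the reduction graph `G_H`. -/
abbrev RVtx (F : Finset (X × Y × Z)) : Type _ :=
  (X ⊕ Y) ⊕ (({e // e ∈ F} × Bool) ⊕ ({e // e ∈ F} ⊕ Z))

variable (F : Finset (X × Y × Z))

instance instDecEqRVtx : DecidableEq (RVtx F) :=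
  fun a b => inferInstanceAs (Decidable (a = b))

instance instFintypeRVtx : Fintype (RVtx F) :=
  inferInstanceAs (Fintype ((X ⊕ Y) ⊕ (({e // e ∈ F} × Bool) ⊕ ({e // e ∈ F} ⊕ Z))))

/-- The vertex `x` of a hyperedge `e = ⟨x, y, z⟩`, viewed in layer `V₁`. -/
def xV (e : {e // e ∈ F}) : RVtx F := Sum.inl (Sum.inl e.1.1)

/-- The vertex `y` of a hyperedge `e = ⟨x, y, z⟩`, viewed in layer `V₁`. -/
def yV (e : {e // e ∈ F}) : RVtx F := Sum.inl (Sum.inr e.1.2.1)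

/-- The vertex `z` of a hyperedge `e = ⟨x, y, z⟩`, viewed in layer `V₄`. -/
def zV (e : {e // e ∈ F}) : RVtx F := Sum.inr (Sum.inr (Sum.inr e.1.2.2))

/-- The new vertex `x_e` of layer `V₂` associated with a hyperedge `e`. -/
def xE (e : {e // e ∈ F}) : RVtx F := Sum.inr (Sum.inl (e, false))

/-- The new vertex `y_e` of layer `V₂` associated with a hyperedge `e`. -/
def yE (e : {e // e ∈ F}) : RVtx F := Sum.inr (Sum.inl (e, true))

/-- The new vertex `z_e` of layer `V₃` associated with a hyperedge `e`. -/
def zE (e : {e // e ∈ F}) : RVtx F := Sum.inr (Sum.inr (Sum.inl e))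

/-- Layer `V₁ = X ∪ Y` of `G_H`. -/
def L1 : Finset (RVtx F) := Finset.univ.image fun a : X ⊕ Y => (Sum.inl a : RVtx F)

/-- Layer `V₂ = {x_e, y_e : e ∈ F}` of `G_H`. -/
def L2 : Finset (RVtx F) :=
  Finset.univ.image fun p : {e // e ∈ F} × Bool => (Sum.inr (Sum.inl p) : RVtx F)

/-- Layer `V₃ = {z_e : e ∈ F}` of `G_H`. -/
def L3 : Finset (RVtx F) :=
  Finset.univ.image fun e : {e // e ∈ F} => (Sum.inr (Sum.inr (Sum.inl e)) : RVtx F)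

/-- Layer `V₄ = Z` of `G_H`. -/
def L4 : Finset (RVtx F) :=
  Finset.univ.image fun z : Z => (Sum.inr (Sum.inr (Sum.inr z)) : RVtx F)

/-- The edges of the reduction graph `G_H`: for each hyperedge `e = ⟨x, y, z⟩`
the edges `{x, x_e}, {x, y_e}, {y, x_e}, {y, y_e}, {x_e, z_e}, {y_e, z_e}, {z_e, z}`. -/
def GHedges : Finset (Sym2 (RVtx F)) :=
  Finset.univ.biUnion fun e : {e // e ∈ F} =>
    { s(xV F e, xE F e), s(xV F e, yE F e), s(yV F e, xE F e), s(yV F e, yE F e),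
      s(xE F e, zE F e), s(yE F e, zE F e), s(zE F e, zV F e) }

/-- `M` is an IV-matching of the 4-layer graph with layers `V1, V2, V3, V4` and
edge set `E`: it is a set of edges of the graph such that every vertex of `V1` is
incident in `M` to exactly one vertex of `V2`; every vertex of `V2` is incident in
`M` to exactly one vertex of `V1 ∪ V3`; every vertex of `V3` is incident in `M`
either to exactly two vertices of `V2` and no vertex of `V4`, or to exactly one
vertex of `V4` and no vertex of `V2`; and every vertex of `V4` is incident in `M`
to exactly one vertex of `V3`. -/
def IVMatching {V : Type*} [DecidableEq V] (V1 V2 V3 V4 : Finset V)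
    (E M : Finset (Sym2 V)) : Prop :=
  M ⊆ E ∧
  (∀ v ∈ V1, (V2.filter fun w => s(v, w) ∈ M).card = 1) ∧
  (∀ v ∈ V2, ((V1 ∪ V3).filter fun w => s(v, w) ∈ M).card = 1) ∧
  (∀ v ∈ V3,
    ((V2.filter fun w => s(v, w) ∈ M).card = 2 ∧ (V4.filter fun w => s(v, w) ∈ M).card = 0) ∨
    ((V4.filter fun w => s(v, w) ∈ M).card = 1 ∧ (V2.filter fun w => s(v, w) ∈ M).card = 0)) ∧
  (∀ v ∈ V4, (V3.filter fun w => s(v, w) ∈ M).card = 1)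

/-- `N` is a perfect matching of the tripartite hypergraph `H = (X ∪ Y ∪ Z, F)`:
a set of pairwise disjoint hyperedges of `F` covering every vertex. -/
def HPerfectMatching (N : Finset (X × Y × Z)) : Prop :=
  N ⊆ F ∧
  (∀ e ∈ N, ∀ f ∈ N, e ≠ f → e.1 ≠ f.1 ∧ e.2.1 ≠ f.2.1 ∧ e.2.2 ≠ f.2.2) ∧
  (∀ x : X, ∃ e ∈ N, e.1 = x) ∧
  (∀ y : Y, ∃ e ∈ N, e.2.1 = y) ∧
  (∀ z : Z, ∃ e ∈ N, e.2.2 = z)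

set_option linter.unreachableTactic false
set_option linter.unusedTactic false
set_option linter.unusedSectionVars false

variable (F : Finset (X × Y × Z))

lemma mem_GHedges_iff (s : Sym2 (RVtx F)) :
    s ∈ GHedges F ↔ ∃ e : {e // e ∈ F},
      s = s(xV F e, xE F e) ∨ s = s(xV F e, yE F e) ∨ s = s(yV F e, xE F e) ∨
      s = s(yV F e, yE F e) ∨ s = s(xE F e, zE F e) ∨ s = s(yE F e, zE F e) ∨
      s = s(zE F e, zV F e) := by
  simp [GHedges]

lemma inc_x (x : X) (w : RVtx F) (h : s(Sum.inl (Sum.inl x), w) ∈ GHedges F) :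
    ∃ e : {e // e ∈ F}, e.1.1 = x ∧ (w = xE F e ∨ w = yE F e) := by
  rw [mem_GHedges_iff] at h
  obtain ⟨e, h⟩ := h
  simp only [Sym2.eq, Sym2.rel_iff', xV, yV, xE, yE, zE, zV, Prod.mk.injEq, Prod.swap_prod_mk] at h
  refine ⟨e, ?_⟩
  aesop

lemma inc_y (y : Y) (w : RVtx F) (h : s(Sum.inl (Sum.inr y), w) ∈ GHedges F) :
    ∃ e : {e // e ∈ F}, e.1.2.1 = y ∧ (w = xE F e ∨ w = yE F e) := by
  rw [mem_GHedges_iff] at h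
  obtain ⟨e, h⟩ := h
  simp only [Sym2.eq, Sym2.rel_iff', xV, yV, xE, yE, zE, zV, Prod.mk.injEq, Prod.swap_prod_mk] at h
  refine ⟨e, ?_⟩
  aesop

lemma inc_z (z : Z) (w : RVtx F) (h : s((Sum.inr (Sum.inr (Sum.inr z)) : RVtx F), w) ∈ GHedges F) :
    ∃ e : {e // e ∈ F}, e.1.2.2 = z ∧ w = zE F e := by
  rw [mem_GHedges_iff] at h
  obtain ⟨e, h⟩ := h
  simp only [Sym2.eq, Sym2.rel_iff', xV, yV, xE, yE, zE, zV, Prod.mk.injEq, Prod.swap_prod_mk] at h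
  refine ⟨e, ?_⟩
  aesop

lemma inc_v2 (e : {e // e ∈ F}) (b : Bool) (w : RVtx F)
    (h : s((Sum.inr (Sum.inl (e, b)) : RVtx F), w) ∈ GHedges F) :
    w = xV F e ∨ w = yV F e ∨ w = zE F e := by
  rw [mem_GHedges_iff] at h
  obtain ⟨f, h⟩ := h
  simp only [Sym2.eq, Sym2.rel_iff', xV, yV, xE, yE, zE, zV, Prod.mk.injEq, Prod.swap_prod_mk] at h
  aesop

lemma inc_v3 (e : {e // e ∈ F}) (w : RVtx F)
    (h : s(zE F e, w) ∈ GHedges F) :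
    w = xE F e ∨ w = yE F e ∨ w = zV F e := by
  rw [mem_GHedges_iff] at h
  obtain ⟨f, h⟩ := h
  simp only [Sym2.eq, Sym2.rel_iff', xV, yV, xE, yE, zE, zV, Prod.mk.injEq, Prod.swap_prod_mk] at h
  aesop

lemma key_lemma (M : Finset (Sym2 (RVtx F)))
    (h : IVMatching (L1 F) (L2 F) (L3 F) (L4 F) (GHedges F) M)
    (e : {e // e ∈ F}) (b : Bool) (w : RVtx F) (hw : w ∈ L1 F)
    (hm : s(w, (Sum.inr (Sum.inl (e, b)) : RVtx F)) ∈ M) :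
    s(zE F e, zV F e) ∈ M := by
  obtain ⟨hME, h1, h2, h3, h4⟩ := h
  have hz3 : zE F e ∈ L3 F := by simp [L3, zE]
  rcases h3 _ hz3 with ⟨hc2, hc0⟩ | ⟨hc1, hc0⟩
  · -- V2-count 2 case: contradiction
    exfalso
    have hsub : ((L2 F).filter fun u => s(zE F e, u) ∈ M) ⊆ {xE F e, yE F e} := by
      intro u hu
      rw [Finset.mem_filter] at hu
      rcases inc_v3 F e u (hME hu.2) with h' | h' | h'
      · simp [h']
      · simp [h']
      · exfalso; revert hu; simp [h', L2, zV]
    have hcard : ({xE F e, yE F e} : Finset (RVtx F)).card ≤ 2 := Finset.card_insert_le _ _ |>.trans (by simp)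
    have heq : ((L2 F).filter fun u => s(zE F e, u) ∈ M) = {xE F e, yE F e} :=
      Finset.eq_of_subset_of_card_le hsub (by omega)
    have hxe : s(zE F e, xE F e) ∈ M := by
      have : xE F e ∈ (L2 F).filter fun u => s(zE F e, u) ∈ M := by rw [heq]; simp
      exact (Finset.mem_filter.mp this).2
    have hye : s(zE F e, yE F e) ∈ M := by
      have : yE F e ∈ (L2 F).filter fun u => s(zE F e, u) ∈ M := by rw [heq]; simp
      exact (Finset.mem_filter.mp this).2
    -- now (e,b) in V2 has two partners: w and zE e
    have hv2 : (Sum.inr (Sum.inl (e, b)) : RVtx F) ∈ L2 F := by simp [L2]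
    have hcard1 := h2 _ hv2
    have hwin : w ∈ ((L1 F ∪ L3 F).filter fun u => s((Sum.inr (Sum.inl (e, b)) : RVtx F), u) ∈ M) := by
      rw [Finset.mem_filter]
      refine ⟨Finset.mem_union_left _ hw, ?_⟩
      rwa [Sym2.eq_swap]
    have hzin : zE F e ∈ ((L1 F ∪ L3 F).filter fun u => s((Sum.inr (Sum.inl (e, b)) : RVtx F), u) ∈ M) := by
      rw [Finset.mem_filter]
      refine ⟨Finset.mem_union_right _ hz3, ?_⟩
      rw [Sym2.eq_swap]
      cases b
      · exact hxe
      · exact hye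
    have hne : w ≠ zE F e := by
      simp only [L1, Finset.mem_image] at hw
      obtain ⟨a, _, rfl⟩ := hw
      simp [zE]
    have := Finset.card_le_one.mp (le_of_eq hcard1) _ hwin _ hzin
    exact hne this
  · -- V4-count 1 case
    obtain ⟨u, hu⟩ := Finset.card_eq_one.mp hc1
    have hu' : u ∈ ((L4 F).filter fun u => s(zE F e, u) ∈ M) := by rw [hu]; simp
    rw [Finset.mem_filter] at hu'
    rcases inc_v3 F e u (hME hu'.2) with h' | h' | h'
    · exfalso; have := hu'.1; rw [h'] at this; revert this; simp [L4, xE]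
    · exfalso; have := hu'.1; rw [h'] at this; revert this; simp [L4, yE]
    · rw [h'] at hu'; exact hu'.2

lemma forward_dir (M : Finset (Sym2 (RVtx F)))
    (h : IVMatching (L1 F) (L2 F) (L3 F) (L4 F) (GHedges F) M) :
    ∃ N : Finset (X × Y × Z), HPerfectMatching F N := by
  classical
  obtain ⟨hME, h1, h2, h3, h4⟩ := h
  set N : Finset (X × Y × Z) :=
    (F.attach.filter fun e => s(zE F e, zV F e) ∈ M).image Subtype.val with hN
  have memN : ∀ a : X × Y × Z, a ∈ N ↔ ∃ h : a ∈ F, s(zE F ⟨a, h⟩, zV F ⟨a, h⟩) ∈ M := by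
    intro a
    simp [hN, Finset.mem_image, Finset.mem_filter]
  refine ⟨N, ?_, ?_, ?_, ?_, ?_⟩
  · intro a ha; exact ((memN a).mp ha).fst
  · -- disjointness
    intro a ha c hc hne
    rw [memN] at ha hc
    obtain ⟨haF, haM⟩ := ha
    obtain ⟨hcF, hcM⟩ := hc
    set ea : {e // e ∈ F} := ⟨a, haF⟩
    set ec : {e // e ∈ F} := ⟨c, hcF⟩
    have hesne : ea ≠ ec := fun h => hne (congrArg Subtype.val h)
    -- for e in N, one of xE e, yE e is matched to xV e, and one to yV e
    have hmain : ∀ e : {e // e ∈ F}, s(zE F e, zV F e) ∈ M →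
        (s(xV F e, xE F e) ∈ M ∨ s(xV F e, yE F e) ∈ M) ∧
        (s(yV F e, xE F e) ∈ M ∨ s(yV F e, yE F e) ∈ M) := by
      intro e heM
      -- V2-count at zE e is 0
      have hz3 : zE F e ∈ L3 F := by simp [L3, zE]
      have hc0 : ((L2 F).filter fun u => s(zE F e, u) ∈ M).card = 0 := by
        rcases h3 _ hz3 with ⟨_, hc0⟩ | ⟨_, hc0⟩
        · exfalso
          have : zV F e ∈ ((L4 F).filter fun u => s(zE F e, u) ∈ M) := by
            rw [Finset.mem_filter]; exact ⟨by simp [L4, zV], heM⟩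
          rw [Finset.card_eq_zero] at hc0
          rw [hc0] at this; exact absurd this (Finset.notMem_empty _)
        · exact hc0
      rw [Finset.card_eq_zero] at hc0
      have hnoz : ∀ b : Bool, s(zE F e, (Sum.inr (Sum.inl (e, b)) : RVtx F)) ∉ M := by
        intro b hmem
        have : (Sum.inr (Sum.inl (e, b)) : RVtx F) ∈ ((L2 F).filter fun u => s(zE F e, u) ∈ M) := by
          rw [Finset.mem_filter]; exact ⟨by simp [L2], hmem⟩
        rw [hc0] at this; exact absurd this (Finset.notMem_empty _)
      -- partner of xE e
      have hpart : ∀ b : Bool, s(xV F e, (Sum.inr (Sum.inl (e, b)) : RVtx F)) ∈ M ∨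
          s(yV F e, (Sum.inr (Sum.inl (e, b)) : RVtx F)) ∈ M := by
        intro b
        have hv2 : (Sum.inr (Sum.inl (e, b)) : RVtx F) ∈ L2 F := by simp [L2]
        obtain ⟨u, hu⟩ := Finset.card_eq_one.mp (h2 _ hv2)
        have hu' : u ∈ ((L1 F ∪ L3 F).filter fun w => s((Sum.inr (Sum.inl (e, b)) : RVtx F), w) ∈ M) := by
          rw [hu]; simp
        rw [Finset.mem_filter] at hu'
        rcases inc_v2 F e b u (hME hu'.2) with h' | h' | h'
        · left; rw [← h', Sym2.eq_swap]; exact hu'.2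
        · right; rw [← h', Sym2.eq_swap]; exact hu'.2
        · exfalso
          have := hu'.2
          rw [h', Sym2.eq_swap] at this
          exact hnoz b this
      -- xE e and yE e can't both go to xV e, nor both to yV e
      rcases hpart false with hf | hf <;> rcases hpart true with ht | ht
      · exfalso
        have hxv1 : xV F e ∈ L1 F := by simp [L1, xV]
        have h1c := h1 _ hxv1
        have hin1 : (Sum.inr (Sum.inl (e, false)) : RVtx F) ∈ ((L2 F).filter fun w => s(xV F e, w) ∈ M) := by
          rw [Finset.mem_filter]; exact ⟨by simp [L2], hf⟩
        have hin2 : (Sum.inr (Sum.inl (e, true)) : RVtx F) ∈ ((L2 F).filter fun w => s(xV F e, w) ∈ M) := by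
          rw [Finset.mem_filter]; exact ⟨by simp [L2], ht⟩
        have := Finset.card_le_one.mp (le_of_eq h1c) _ hin1 _ hin2
        simp at this
      · exact ⟨Or.inl hf, Or.inr ht⟩
      · exact ⟨Or.inr ht, Or.inl hf⟩
      · exfalso
        have hyv1 : yV F e ∈ L1 F := by simp [L1, yV]
        have h1c := h1 _ hyv1
        have hin1 : (Sum.inr (Sum.inl (e, false)) : RVtx F) ∈ ((L2 F).filter fun w => s(yV F e, w) ∈ M) := by
          rw [Finset.mem_filter]; exact ⟨by simp [L2], hf⟩
        have hin2 : (Sum.inr (Sum.inl (e, true)) : RVtx F) ∈ ((L2 F).filter fun w => s(yV F e, w) ∈ M) := by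
          rw [Finset.mem_filter]; exact ⟨by simp [L2], ht⟩
        have := Finset.card_le_one.mp (le_of_eq h1c) _ hin1 _ hin2
        simp at this
    refine ⟨?_, ?_, ?_⟩
    · -- first coordinates differ
      intro hxy
      have hva : xV F ea = xV F ec := by simp [xV, hxy]; exact hxy
      have h1c := h1 (xV F ea) (by simp [L1, xV])
      have hpa := (hmain ea haM).1
      have hpc := (hmain ec hcM).1
      rw [← hva] at hpc
      have getmem : ∀ (e : {e // e ∈ F}) (b : Bool),
          s(xV F ea, (Sum.inr (Sum.inl (e, b)) : RVtx F)) ∈ M →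
          (Sum.inr (Sum.inl (e, b)) : RVtx F) ∈ ((L2 F).filter fun w => s(xV F ea, w) ∈ M) := by
        intro e b hm
        rw [Finset.mem_filter]; exact ⟨by simp [L2], hm⟩
      rcases hpa with hpa | hpa <;> rcases hpc with hpc | hpc <;>
      · simp only [xE, yE] at hpa hpc
        have m1 := getmem _ _ hpa
        have m2 := getmem _ _ hpc
        have := Finset.card_le_one.mp (le_of_eq h1c) _ m1 _ m2
        simp only [Sum.inr.injEq, Sum.inl.injEq, Prod.mk.injEq] at this
        first
        | exact hesne this
        | exact hesne this.1
        | exact absurd this.2 (by decide)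
        | exact absurd this.2 (by simp)
    · -- second coordinates differ
      intro hxy
      have hva : yV F ea = yV F ec := by simp [yV, hxy]; exact hxy
      have h1c := h1 (yV F ea) (by simp [L1, yV])
      have hpa := (hmain ea haM).2
      have hpc := (hmain ec hcM).2
      rw [← hva] at hpc
      have getmem : ∀ (e : {e // e ∈ F}) (b : Bool),
          s(yV F ea, (Sum.inr (Sum.inl (e, b)) : RVtx F)) ∈ M →
          (Sum.inr (Sum.inl (e, b)) : RVtx F) ∈ ((L2 F).filter fun w => s(yV F ea, w) ∈ M) := by
        intro e b hm
        rw [Finset.mem_filter]; exact ⟨by simp [L2], hm⟩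
      rcases hpa with hpa | hpa <;> rcases hpc with hpc | hpc <;>
      · simp only [xE, yE] at hpa hpc
        have m1 := getmem _ _ hpa
        have m2 := getmem _ _ hpc
        have := Finset.card_le_one.mp (le_of_eq h1c) _ m1 _ m2
        simp only [Sum.inr.injEq, Sum.inl.injEq, Prod.mk.injEq] at this
        first
        | exact hesne this
        | exact hesne this.1
        | exact absurd this.2 (by decide)
        | exact absurd this.2 (by simp)
    · -- third coordinates differ
      intro hxy
      have hva : zV F ea = zV F ec := by simp [zV, hxy]; exact hxy
      have h4c := h4 (zV F ea) (by simp [L4, zV])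
      have m1 : zE F ea ∈ ((L3 F).filter fun w => s(zV F ea, w) ∈ M) := by
        rw [Finset.mem_filter]
        exact ⟨by simp [L3, zE], by rw [Sym2.eq_swap]; exact haM⟩
      have m2 : zE F ec ∈ ((L3 F).filter fun w => s(zV F ea, w) ∈ M) := by
        rw [Finset.mem_filter]
        refine ⟨by simp [L3, zE], ?_⟩
        rw [hva, Sym2.eq_swap]; exact hcM
      have := Finset.card_le_one.mp (le_of_eq h4c) _ m1 _ m2
      simp [zE] at this
      exact hesne this
  · -- covers X
    intro x
    have hv1 : (Sum.inl (Sum.inl x) : RVtx F) ∈ L1 F := by simp [L1]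
    obtain ⟨w, hw⟩ := Finset.card_eq_one.mp (h1 _ hv1)
    have hw' : w ∈ ((L2 F).filter fun w => s((Sum.inl (Sum.inl x) : RVtx F), w) ∈ M) := by rw [hw]; simp
    rw [Finset.mem_filter] at hw'
    obtain ⟨e, hex, hor⟩ := inc_x F x w (hME hw'.2)
    have hb : ∃ b : Bool, w = (Sum.inr (Sum.inl (e, b)) : RVtx F) := by
      rcases hor with h' | h'
      · exact ⟨false, h'⟩
      · exact ⟨true, h'⟩
    obtain ⟨b, rfl⟩ := hb
    have := key_lemma F M ⟨hME, h1, h2, h3, h4⟩ e b _ hv1 hw'.2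
    exact ⟨e.1, (memN e.1).mpr ⟨e.2, this⟩, hex⟩
  · -- covers Y
    intro y
    have hv1 : (Sum.inl (Sum.inr y) : RVtx F) ∈ L1 F := by simp [L1]
    obtain ⟨w, hw⟩ := Finset.card_eq_one.mp (h1 _ hv1)
    have hw' : w ∈ ((L2 F).filter fun w => s((Sum.inl (Sum.inr y) : RVtx F), w) ∈ M) := by rw [hw]; simp
    rw [Finset.mem_filter] at hw'
    obtain ⟨e, hey, hor⟩ := inc_y F y w (hME hw'.2)
    have hb : ∃ b : Bool, w = (Sum.inr (Sum.inl (e, b)) : RVtx F) := by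
      rcases hor with h' | h'
      · exact ⟨false, h'⟩
      · exact ⟨true, h'⟩
    obtain ⟨b, rfl⟩ := hb
    have := key_lemma F M ⟨hME, h1, h2, h3, h4⟩ e b _ hv1 hw'.2
    exact ⟨e.1, (memN e.1).mpr ⟨e.2, this⟩, hey⟩
  · -- covers Z
    intro z
    have hv4 : (Sum.inr (Sum.inr (Sum.inr z)) : RVtx F) ∈ L4 F := by simp [L4]
    obtain ⟨w, hw⟩ := Finset.card_eq_one.mp (h4 _ hv4)
    have hw' : w ∈ ((L3 F).filter fun w => s((Sum.inr (Sum.inr (Sum.inr z)) : RVtx F), w) ∈ M) := by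
      rw [hw]; simp
    rw [Finset.mem_filter] at hw'
    obtain ⟨e, hez, rfl⟩ := inc_z F z w (hME hw'.2)
    refine ⟨e.1, (memN e.1).mpr ⟨e.2, ?_⟩, hez⟩
    have : zV F e = (Sum.inr (Sum.inr (Sum.inr z)) : RVtx F) := by simp [zV, hez]
    rw [this, Sym2.eq_swap]
    exact hw'.2

lemma backward_dir (N : Finset (X × Y × Z)) (hPM : HPerfectMatching F N) :
    ∃ M : Finset (Sym2 (RVtx F)), IVMatching (L1 F) (L2 F) (L3 F) (L4 F) (GHedges F) M := by
  classical
  obtain ⟨hNF, hdisj, hcx, hcy, hcz⟩ := hPM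
  have uX : ∀ e ∈ N, ∀ f ∈ N, e.1 = f.1 → e = f := by
    intro e he f hf h
    by_contra hne
    exact (hdisj e he f hf hne).1 h
  have uY : ∀ e ∈ N, ∀ f ∈ N, e.2.1 = f.2.1 → e = f := by
    intro e he f hf h
    by_contra hne
    exact (hdisj e he f hf hne).2.1 h
  have uZ : ∀ e ∈ N, ∀ f ∈ N, e.2.2 = f.2.2 → e = f := by
    intro e he f hf h
    by_contra hne
    exact (hdisj e he f hf hne).2.2 h
  set M : Finset (Sym2 (RVtx F)) := F.attach.biUnion (fun e =>
    if e.1 ∈ N then {s(xV F e, xE F e), s(yV F e, yE F e), s(zE F e, zV F e)}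
    else {s(xE F e, zE F e), s(yE F e, zE F e)}) with hM
  have memM : ∀ s : Sym2 (RVtx F), s ∈ M ↔ ∃ e : {e // e ∈ F},
      (e.1 ∈ N ∧ (s = s(xV F e, xE F e) ∨ s = s(yV F e, yE F e) ∨ s = s(zE F e, zV F e))) ∨
      (e.1 ∉ N ∧ (s = s(xE F e, zE F e) ∨ s = s(yE F e, zE F e))) := by
    intro s
    rw [hM]
    simp only [Finset.mem_biUnion, Finset.mem_attach, true_and]
    constructor
    · rintro ⟨e, he⟩
      refine ⟨e, ?_⟩
      by_cases h : e.1 ∈ N <;> simp [h] at he <;> tauto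
    · rintro ⟨e, he⟩
      refine ⟨e, ?_⟩
      rcases he with ⟨h, h'⟩ | ⟨h, h'⟩ <;> simp [h] <;> tauto
  -- characterizations of incidences in M
  have Mx : ∀ (x : X) (w : RVtx F), s((Sum.inl (Sum.inl x) : RVtx F), w) ∈ M ↔
      ∃ f : {e // e ∈ F}, f.1 ∈ N ∧ f.1.1 = x ∧ w = xE F f := by
    intro x w
    rw [memM]
    simp only [xV, yV, xE, yE, zE, zV, Sym2.eq, Sym2.rel_iff', Prod.mk.injEq,
      Prod.swap_prod_mk, Sum.inl.injEq, Sum.inr.injEq, reduceCtorEq, false_and, and_false,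
      or_false, false_or]
    constructor
    · rintro ⟨f, hf⟩
      exact ⟨f, by tauto⟩
    · rintro ⟨f, hfN, hfx, rfl⟩
      exact ⟨f, by tauto⟩
  have My : ∀ (y : Y) (w : RVtx F), s((Sum.inl (Sum.inr y) : RVtx F), w) ∈ M ↔
      ∃ f : {e // e ∈ F}, f.1 ∈ N ∧ f.1.2.1 = y ∧ w = yE F f := by
    intro y w
    rw [memM]
    simp only [xV, yV, xE, yE, zE, zV, Sym2.eq, Sym2.rel_iff', Prod.mk.injEq,
      Prod.swap_prod_mk, Sum.inl.injEq, Sum.inr.injEq, reduceCtorEq, false_and, and_false,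
      or_false, false_or]
    constructor
    · rintro ⟨f, hf⟩
      exact ⟨f, by tauto⟩
    · rintro ⟨f, hfN, hfy, rfl⟩
      exact ⟨f, by tauto⟩
  have Mv2f : ∀ (e : {e // e ∈ F}) (w : RVtx F),
      s((Sum.inr (Sum.inl (e, false)) : RVtx F), w) ∈ M ↔
      (e.1 ∈ N ∧ w = xV F e) ∨ (e.1 ∉ N ∧ w = zE F e) := by
    intro e w
    rw [memM]
    simp only [xV, yV, xE, yE, zE, zV, Sym2.eq, Sym2.rel_iff', Prod.mk.injEq,
      Prod.swap_prod_mk, Sum.inl.injEq, Sum.inr.injEq, reduceCtorEq, false_and, and_false,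
      or_false, false_or, and_true, true_and, Bool.false_eq_true]
    constructor
    · rintro ⟨f, (⟨hN, rfl, rfl⟩ | ⟨hN, rfl, rfl⟩)⟩ <;> tauto
    · rintro (⟨hN, rfl⟩ | ⟨hN, rfl⟩) <;> exact ⟨e, by tauto⟩
  have Mv2t : ∀ (e : {e // e ∈ F}) (w : RVtx F),
      s((Sum.inr (Sum.inl (e, true)) : RVtx F), w) ∈ M ↔
      (e.1 ∈ N ∧ w = yV F e) ∨ (e.1 ∉ N ∧ w = zE F e) := by
    intro e w
    rw [memM]
    simp only [xV, yV, xE, yE, zE, zV, Sym2.eq, Sym2.rel_iff', Prod.mk.injEq,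
      Prod.swap_prod_mk, Sum.inl.injEq, Sum.inr.injEq, reduceCtorEq, false_and, and_false,
      or_false, false_or, and_true, true_and, Bool.true_eq_false]
    constructor
    · rintro ⟨f, (⟨hN, rfl, rfl⟩ | ⟨hN, rfl, rfl⟩)⟩ <;> tauto
    · rintro (⟨hN, rfl⟩ | ⟨hN, rfl⟩) <;> exact ⟨e, by tauto⟩
  have Mv3 : ∀ (e : {e // e ∈ F}) (w : RVtx F),
      s(zE F e, w) ∈ M ↔
      (e.1 ∈ N ∧ w = zV F e) ∨ (e.1 ∉ N ∧ (w = xE F e ∨ w = yE F e)) := by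
    intro e w
    rw [memM]
    simp only [xV, yV, xE, yE, zE, zV, Sym2.eq, Sym2.rel_iff', Prod.mk.injEq,
      Prod.swap_prod_mk, Sum.inl.injEq, Sum.inr.injEq, reduceCtorEq, false_and, and_false,
      or_false, false_or, and_true, true_and]
    constructor
    · rintro ⟨f, (⟨hN, rfl, rfl⟩ | ⟨hN, (⟨rfl, rfl⟩ | ⟨rfl, rfl⟩)⟩)⟩ <;> tauto
    · rintro (⟨hN, rfl⟩ | ⟨hN, (rfl | rfl)⟩) <;> exact ⟨e, by tauto⟩
  have Mv4 : ∀ (z : Z) (w : RVtx F), s((Sum.inr (Sum.inr (Sum.inr z)) : RVtx F), w) ∈ M ↔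
      ∃ f : {e // e ∈ F}, f.1 ∈ N ∧ f.1.2.2 = z ∧ w = zE F f := by
    intro z w
    rw [memM]
    simp only [xV, yV, xE, yE, zE, zV, Sym2.eq, Sym2.rel_iff', Prod.mk.injEq,
      Prod.swap_prod_mk, Sum.inl.injEq, Sum.inr.injEq, reduceCtorEq, false_and, and_false,
      or_false, false_or]
    constructor
    · rintro ⟨f, hf⟩
      exact ⟨f, by tauto⟩
    · rintro ⟨f, hfN, hfz, rfl⟩
      exact ⟨f, by tauto⟩
  refine ⟨M, ?_, ?_, ?_, ?_, ?_⟩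
  · -- M ⊆ GHedges
    intro s hs
    rw [memM] at hs
    obtain ⟨e, he⟩ := hs
    rw [mem_GHedges_iff]
    exact ⟨e, by tauto⟩
  · -- V1 condition
    intro v hv
    simp only [L1, Finset.mem_image, Finset.mem_univ, true_and] at hv
    obtain ⟨a, rfl⟩ := hv
    cases a with
    | inl x =>
      obtain ⟨e₀, he₀N, he₀x⟩ := hcx x
      set E0 : {e // e ∈ F} := ⟨e₀, hNF he₀N⟩
      rw [Finset.card_eq_one]
      refine ⟨xE F E0, ?_⟩
      ext w
      simp only [Finset.mem_filter, Finset.mem_singleton, Mx]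
      constructor
      · rintro ⟨hw2, f, hfN, hfx, rfl⟩
        have : f = E0 := Subtype.ext (uX _ hfN _ he₀N (by rw [hfx, he₀x]))
        rw [this]
      · rintro rfl
        exact ⟨by simp [L2, xE], E0, he₀N, he₀x, rfl⟩
    | inr y =>
      obtain ⟨e₀, he₀N, he₀y⟩ := hcy y
      set E0 : {e // e ∈ F} := ⟨e₀, hNF he₀N⟩
      rw [Finset.card_eq_one]
      refine ⟨yE F E0, ?_⟩
      ext w
      simp only [Finset.mem_filter, Finset.mem_singleton, My]
      constructor
      · rintro ⟨hw2, f, hfN, hfy, rfl⟩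
        have : f = E0 := Subtype.ext (uY _ hfN _ he₀N (by rw [hfy, he₀y]))
        rw [this]
      · rintro rfl
        exact ⟨by simp [L2, yE], E0, he₀N, he₀y, rfl⟩
  · -- V2 condition
    intro v hv
    simp only [L2, Finset.mem_image, Finset.mem_univ, true_and] at hv
    obtain ⟨⟨e, b⟩, rfl⟩ := hv
    rw [Finset.card_eq_one]
    by_cases heN : e.1 ∈ N
    · cases b
      · refine ⟨xV F e, ?_⟩
        ext w
        simp only [Finset.mem_filter, Finset.mem_singleton, Mv2f]
        constructor
        · rintro ⟨hw13, (⟨_, rfl⟩ | ⟨hN, rfl⟩)⟩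
          · rfl
          · exact absurd heN hN
        · rintro rfl
          exact ⟨Finset.mem_union_left _ (by simp [L1, xV]), Or.inl ⟨heN, rfl⟩⟩
      · refine ⟨yV F e, ?_⟩
        ext w
        simp only [Finset.mem_filter, Finset.mem_singleton, Mv2t]
        constructor
        · rintro ⟨hw13, (⟨_, rfl⟩ | ⟨hN, rfl⟩)⟩
          · rfl
          · exact absurd heN hN
        · rintro rfl
          exact ⟨Finset.mem_union_left _ (by simp [L1, yV]), Or.inl ⟨heN, rfl⟩⟩
    · cases b
      · refine ⟨zE F e, ?_⟩
        ext w
        simp only [Finset.mem_filter, Finset.mem_singleton, Mv2f]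
        constructor
        · rintro ⟨hw13, (⟨hN, rfl⟩ | ⟨_, rfl⟩)⟩
          · exact absurd hN heN
          · rfl
        · rintro rfl
          exact ⟨Finset.mem_union_right _ (by simp [L3, zE]), Or.inr ⟨heN, rfl⟩⟩
      · refine ⟨zE F e, ?_⟩
        ext w
        simp only [Finset.mem_filter, Finset.mem_singleton, Mv2t]
        constructor
        · rintro ⟨hw13, (⟨hN, rfl⟩ | ⟨_, rfl⟩)⟩
          · exact absurd hN heN
          · rfl
        · rintro rfl
          exact ⟨Finset.mem_union_right _ (by simp [L3, zE]), Or.inr ⟨heN, rfl⟩⟩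
  · -- V3 condition
    intro v hv
    simp only [L3, Finset.mem_image, Finset.mem_univ, true_and] at hv
    obtain ⟨e, rfl⟩ := hv
    have hzee : (Sum.inr (Sum.inr (Sum.inl e)) : RVtx F) = zE F e := rfl
    rw [hzee]
    by_cases heN : e.1 ∈ N
    · right
      constructor
      · rw [Finset.card_eq_one]
        refine ⟨zV F e, ?_⟩
        ext w
        simp only [Finset.mem_filter, Finset.mem_singleton, Mv3]
        constructor
        · rintro ⟨hw4, (⟨_, rfl⟩ | ⟨hN, _⟩)⟩
          · rfl
          · exact absurd heN hN
        · rintro rfl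
          exact ⟨by simp [L4, zV], Or.inl ⟨heN, rfl⟩⟩
      · rw [Finset.card_eq_zero]
        ext w
        simp only [Finset.mem_filter, Finset.notMem_empty, iff_false, not_and, Mv3]
        intro hw2
        rintro (⟨_, rfl⟩ | ⟨hN, _⟩)
        · revert hw2; simp [L2, zV]
        · exact absurd heN hN
    · left
      constructor
      · have : ((L2 F).filter fun w => s(zE F e, w) ∈ M) = {xE F e, yE F e} := by
          ext w
          simp only [Finset.mem_filter, Finset.mem_insert, Finset.mem_singleton, Mv3]
          constructor
          · rintro ⟨hw2, (⟨hN, _⟩ | ⟨_, h⟩)⟩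
            · exact absurd hN heN
            · exact h
          · rintro (rfl | rfl)
            · exact ⟨by simp [L2, xE], Or.inr ⟨heN, Or.inl rfl⟩⟩
            · exact ⟨by simp [L2, yE], Or.inr ⟨heN, Or.inr rfl⟩⟩
        rw [this]
        rw [Finset.card_insert_of_notMem (by simp [xE, yE]), Finset.card_singleton]
      · rw [Finset.card_eq_zero]
        ext w
        simp only [Finset.mem_filter, Finset.notMem_empty, iff_false, not_and, Mv3]
        intro hw4
        rintro (⟨hN, _⟩ | ⟨_, (rfl | rfl)⟩)
        · exact absurd hN heN
        · revert hw4; simp [L4, xE]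
        · revert hw4; simp [L4, yE]
  · -- V4 condition
    intro v hv
    simp only [L4, Finset.mem_image, Finset.mem_univ, true_and] at hv
    obtain ⟨z, rfl⟩ := hv
    obtain ⟨e₀, he₀N, he₀z⟩ := hcz z
    set E0 : {e // e ∈ F} := ⟨e₀, hNF he₀N⟩
    rw [Finset.card_eq_one]
    refine ⟨zE F E0, ?_⟩
    ext w
    simp only [Finset.mem_filter, Finset.mem_singleton, Mv4]
    constructor
    · rintro ⟨hw3, f, hfN, hfz, rfl⟩
      have : f = E0 := Subtype.ext (uZ _ hfN _ he₀N (by rw [hfz, he₀z]))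
      rw [this]
    · rintro rfl
      exact ⟨by simp [L3, zE], E0, he₀N, he₀z, rfl⟩

theorem iv_matching_iff_perfect_matching {X Y Z : Type*} [DecidableEq X] [DecidableEq Y] [DecidableEq Z]
    [Fintype X] [Fintype Y] [Fintype Z] (n m : ℕ)
    (hX : Fintype.card X = n) (hY : Fintype.card Y = n) (hZ : Fintype.card Z = n)
    (F : Finset (X × Y × Z)) (hF : F.card = m) :
    (∃ M : Finset (Sym2 (RVtx F)), IVMatching (L1 F) (L2 F) (L3 F) (L4 F) (GHedges F) M) ↔
    (∃ N : Finset (X × Y × Z), HPerfectMatching F N) := by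
  constructor
  · rintro ⟨M, hM⟩
    exact forward_dir F M hM
  · rintro ⟨N, hN⟩
    exact backward_dir F N hN
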